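/- arXiv:1604.06609 — 6 statements merged into one kernel-verified Lean document; each statement's English description precedes it below -/
import Mathlib

section
/- The function Λ satisfies the Riccati ordinary differential equation Λ'(t) = −q + Λ(t)²/η for every t ∈ [0,T], together with the terminal condition Λ(T) = λ. (Explicit solution of the Riccati equation (4.3) arising in the optimal tracking problem with price impact.) -/
open Real

/-- Explicit solution of the Riccati ODE (4.3): Λ'(t) = -q + Λ(t)²/η on [0,T], Λ(T) = λ. -/
theorem stmt_0 (T η q lam : ℝ) (hT : 0 < T) (hη : 0 < η) (hq : 0 < q) (hlam : 0 ≤ lam)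
    (c : ℝ) (hc : c = Real.sqrt (q / η))
    (Lam : ℝ → ℝ)
    (hLam : ∀ t, Lam t =
      η * c * (c * Real.sinh (c * (T - t)) + (lam / η) * Real.cosh (c * (T - t))) /
        ((lam / η) * Real.sinh (c * (T - t)) + c * Real.cosh (c * (T - t)))) :
    (∀ t ∈ Set.Icc (0 : ℝ) T, HasDerivAt Lam (-q + (Lam t) ^ 2 / η) t) ∧ Lam T = lam := by
  have hc0 : 0 < c := by rw [hc]; exact Real.sqrt_pos.mpr (div_pos hq hη)
  have hc2 : c ^ 2 = q / η := by rw [hc]; exact Real.sq_sqrt (div_pos hq hη).le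
  have hfun : Lam = fun s =>
      η * c * (c * Real.sinh (c * (T - s)) + (lam / η) * Real.cosh (c * (T - s))) /
        ((lam / η) * Real.sinh (c * (T - s)) + c * Real.cosh (c * (T - s))) := funext hLam
  constructor
  · intro t ht
    obtain ⟨ht0, htT⟩ := ht
    set u := c * (T - t) with hu
    have hu0 : 0 ≤ u := mul_nonneg hc0.le (by linarith)
    have hD : 0 < lam / η * Real.sinh u + c * Real.cosh u := by
      have h1 : 0 ≤ lam / η * Real.sinh u :=
        mul_nonneg (div_nonneg hlam hη.le) (by simpa using Real.sinh_le_sinh.2 hu0)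
      have h2 : 0 < c * Real.cosh u := mul_pos hc0 (Real.cosh_pos u)
      linarith
    have hder_u : HasDerivAt (fun s => c * (T - s)) (-c) t := by
      have := ((hasDerivAt_id t).const_sub T).const_mul c
      simpa using this
    have hsinh : HasDerivAt (fun s => Real.sinh (c * (T - s))) (Real.cosh u * (-c)) t :=
      hder_u.sinh
    have hcosh : HasDerivAt (fun s => Real.cosh (c * (T - s))) (Real.sinh u * (-c)) t :=
      hder_u.cosh
    have hN : HasDerivAt
        (fun s => η * c * (c * Real.sinh (c * (T - s)) + lam / η * Real.cosh (c * (T - s))))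
        (η * c * (c * (Real.cosh u * (-c)) + lam / η * (Real.sinh u * (-c)))) t :=
      ((hsinh.const_mul c).add (hcosh.const_mul (lam / η))).const_mul (η * c)
    have hDd : HasDerivAt
        (fun s => lam / η * Real.sinh (c * (T - s)) + c * Real.cosh (c * (T - s)))
        (lam / η * (Real.cosh u * (-c)) + c * (Real.sinh u * (-c))) t :=
      (hsinh.const_mul (lam / η)).add (hcosh.const_mul c)
    have hdiv := hN.div hDd (ne_of_gt hD)
    rw [hfun]
    convert hdiv using 1
    · rfl
    · rfl
    · rfl
    have hq' : q = η * c ^ 2 := by rw [hc2]; field_simp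
    rw [hq']
    simp only [← hu]
    field_simp
    ring
  · rw [hLam T]
    simp only [sub_self, mul_zero, Real.sinh_zero, Real.cosh_zero, mul_one, zero_mul, add_zero,
      zero_add]
    field_simp
end

section
/- For all 0 ≤ t ≤ s ≤ T, exp(−∫_t^s Λ(u)/η du) = (c·cosh(c(T−s)) + (λ/η)·sinh(c(T−s))) / (c·cosh(c(T−t)) + (λ/η)·sinh(c(T−t))). (The exponential integral identity used to obtain the closed-form optimal trading rate in Section 4.1.) -/
open Real

/-- The exponential integral identity of Section 4.1:
exp(-∫_t^s Λ(u)/η du) = (c·cosh(c(T-s)) + (λ/η)·sinh(c(T-s))) / (c·cosh(c(T-t)) + (λ/η)·sinh(c(T-t))). -/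
theorem stmt_1 (T η q lam : ℝ) (hT : 0 < T) (hη : 0 < η) (hq : 0 < q) (hlam : 0 ≤ lam)
    (c : ℝ) (hc : c = Real.sqrt (q / η))
    (Lam : ℝ → ℝ)
    (hLam : ∀ t, Lam t =
      η * c * (c * Real.sinh (c * (T - t)) + (lam / η) * Real.cosh (c * (T - t))) /
        ((lam / η) * Real.sinh (c * (T - t)) + c * Real.cosh (c * (T - t)))) :
    ∀ t s : ℝ, 0 ≤ t → t ≤ s → s ≤ T →
      Real.exp (-(∫ u in t..s, Lam u / η)) =
        (c * Real.cosh (c * (T - s)) + (lam / η) * Real.sinh (c * (T - s))) /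
          (c * Real.cosh (c * (T - t)) + (lam / η) * Real.sinh (c * (T - t))) := by
  intro t s ht hts hsT
  have hc0 : 0 < c := by
    rw [hc]; exact Real.sqrt_pos.mpr (div_pos hq hη)
  set m : ℝ := lam / η with hm
  have hm0 : 0 ≤ m := div_nonneg hlam hη.le
  set D : ℝ → ℝ := fun u => c * Real.cosh (c * (T - u)) + m * Real.sinh (c * (T - u))
    with hD
  -- D is positive on [t, s]
  have hDpos : ∀ u ∈ Set.uIcc t s, 0 < D u := by
    intro u hu
    rw [Set.uIcc_of_le hts] at hu
    have hTu : 0 ≤ T - u := by linarith [hu.2]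
    have h1 : 0 < c * Real.cosh (c * (T - u)) :=
      mul_pos hc0 (Real.cosh_pos _)
    have h2 : 0 ≤ m * Real.sinh (c * (T - u)) :=
      mul_nonneg hm0 ((Real.sinh_nonneg_iff.mpr (by positivity)))
    simpa [hD] using add_pos_of_pos_of_nonneg h1 h2
  -- derivative of -log(D u) is Lam u / η
  have hderiv : ∀ u ∈ Set.uIcc t s,
      HasDerivAt (fun u => -Real.log (D u)) (Lam u / η) u := by
    intro u hu
    have hDu : D u ≠ 0 := (hDpos u hu).ne'
    have hD' : HasDerivAt D (-(c * (c * Real.sinh (c * (T - u)) +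
        m * Real.cosh (c * (T - u))))) u := by
      have harg : HasDerivAt (fun u : ℝ => c * (T - u)) (-c) u := by
        have : HasDerivAt (fun u : ℝ => c * (T - u)) (c * (0 - 1)) u :=
          (((hasDerivAt_const u T).sub (hasDerivAt_id u))).const_mul c
        simpa using this
      have h1 : HasDerivAt (fun u => c * Real.cosh (c * (T - u)))
          (c * (Real.sinh (c * (T - u)) * (-c))) u :=
        ((Real.hasDerivAt_cosh _).comp u harg).const_mul c
      have h2 : HasDerivAt (fun u => m * Real.sinh (c * (T - u)))
          (m * (Real.cosh (c * (T - u)) * (-c))) u :=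
        ((Real.hasDerivAt_sinh _).comp u harg).const_mul m
      have := h1.add h2
      exact this.congr_deriv (by ring)
    have hlog : HasDerivAt (fun u => Real.log (D u))
        ((-(c * (c * Real.sinh (c * (T - u)) + m * Real.cosh (c * (T - u))))) / D u) u :=
      hD'.log hDu
    have := hlog.neg
    refine this.congr_deriv ?_
    rw [hLam u]
    have hDeq : (m * Real.sinh (c * (T - u)) + c * Real.cosh (c * (T - u))) = D u := by
      simp [hD]; ring
    rw [hDeq]
    field_simp
  -- integrability
  have hint : IntervalIntegrable (fun u => Lam u / η) MeasureTheory.volume t s := by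
    apply ContinuousOn.intervalIntegrable
    have : ContinuousOn (fun u => η * c * (c * Real.sinh (c * (T - u)) +
        m * Real.cosh (c * (T - u))) / D u / η) (Set.uIcc t s) := by
      apply ContinuousOn.div_const
      apply ContinuousOn.div
      · fun_prop
      · fun_prop
      · intro u hu; exact (hDpos u hu).ne'
    apply this.congr
    intro u hu
    show Lam u / η = _
    rw [hLam u]
    have hDeq : (m * Real.sinh (c * (T - u)) + c * Real.cosh (c * (T - u))) = D u := by
      simp [hD]; ring
    rw [hDeq]
  have hcalc := intervalIntegral.integral_eq_sub_of_hasDerivAt hderiv hint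
  rw [hcalc]
  have hDt : 0 < D t := hDpos t (Set.left_mem_uIcc)
  have hDs : 0 < D s := hDpos s (Set.right_mem_uIcc)
  rw [show -(-Real.log (D s) - -Real.log (D t)) = Real.log (D s) - Real.log (D t) by ring,
    Real.exp_sub, Real.exp_log hDs, Real.exp_log hDt]
end

section
/- Assume λ > 0. For every t ∈ [0,T], ∫_t^T (Λ(t)/η)·(ω(t,T)/ω(s,T)) ds = 1 − c/(c·cosh(c(T−t)) + (λ/η)·sinh(c(T−t))). (This is the deterministic identity which shows that when the price process is a martingale, the price-dependent part of the optimal trading rate equals −(S_t/(2η))·c/(c·cosh(c(T−t)) + (λ/η)·sinh(c(T−t))).) -/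
open Real

/-- The identity ∫_t^T (Λ(t)/η)·(ω(t,T)/ω(s,T)) ds
 = 1 − c/(c·cosh(c(T−t)) + (λ/η)·sinh(c(T−t))) of Section 4.1 (case λ > 0). -/
theorem stmt_4 (T η q lam : ℝ) (hT : 0 < T) (hη : 0 < η) (hq : 0 < q) (hlam : 0 < lam)
    (c : ℝ) (hc : c = Real.sqrt (q / η))
    (Lam : ℝ → ℝ)
    (hLam : ∀ t, Lam t =
      η * c * (c * Real.sinh (c * (T - t)) + (lam / η) * Real.cosh (c * (T - t))) /
        ((lam / η) * Real.sinh (c * (T - t)) + c * Real.cosh (c * (T - t))))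
    (ω : ℝ → ℝ)
    (hω : ∀ t, ω t =
      (lam / η) / (c * Real.sinh (c * (T - t)) + (lam / η) * Real.cosh (c * (T - t)))) :
    ∀ t ∈ Set.Icc (0 : ℝ) T,
      (∫ s in t..T, (Lam t / η) * (ω t / ω s)) =
        1 - c / (c * Real.cosh (c * (T - t)) + (lam / η) * Real.sinh (c * (T - t))) := by
  intro t ht
  obtain ⟨ht0, htT⟩ := ht
  have hc0 : 0 < c := hc ▸ Real.sqrt_pos.mpr (div_pos hq hη)
  have hμ : 0 < lam / η := div_pos hlam hη
  set μ := lam / η with hμdef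
  have hN : ∀ s, s ≤ T → 0 < c * Real.sinh (c * (T - s)) + μ * Real.cosh (c * (T - s)) := by
    intro s hs
    have h1 : 0 ≤ c * (T - s) := mul_nonneg hc0.le (by linarith)
    have h2 : 0 ≤ Real.sinh (c * (T - s)) := Real.sinh_nonneg_iff.mpr h1
    have h3 : 0 < Real.cosh (c * (T - s)) := Real.cosh_pos _
    have := mul_nonneg hc0.le h2
    nlinarith
  have hDpos : 0 < μ * Real.sinh (c * (T - t)) + c * Real.cosh (c * (T - t)) := by
    have h1 : 0 ≤ c * (T - t) := mul_nonneg hc0.le (by linarith)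
    have h2 : 0 ≤ Real.sinh (c * (T - t)) := Real.sinh_nonneg_iff.mpr h1
    have h3 : 0 < Real.cosh (c * (T - t)) := Real.cosh_pos _
    nlinarith
  set D := μ * Real.sinh (c * (T - t)) + c * Real.cosh (c * (T - t)) with hDdef
  have hcongr : Set.EqOn (fun s => (Lam t / η) * (ω t / ω s))
      (fun s => (c / D) * (c * Real.sinh (c * (T - s)) + μ * Real.cosh (c * (T - s))))
      (Set.uIcc t T) := by
    intro s hs
    rw [Set.uIcc_of_le htT] at hs
    have hNs := hN s hs.2
    have hNt := hN t htT
    simp only [hLam, hω]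
    field_simp
    ring
  rw [intervalIntegral.integral_congr hcongr]
  have hder : ∀ s ∈ Set.uIcc t T,
      HasDerivAt (fun s => -(1 / D) * (c * Real.cosh (c * (T - s)) + μ * Real.sinh (c * (T - s))))
        ((c / D) * (c * Real.sinh (c * (T - s)) + μ * Real.cosh (c * (T - s)))) s := by
    intro s _
    have h1 : HasDerivAt (fun s : ℝ => c * (T - s)) (-c) s := by
      simpa using ((hasDerivAt_id s).const_sub T).const_mul c
    have hcosh : HasDerivAt (fun s => Real.cosh (c * (T - s)))
        (Real.sinh (c * (T - s)) * (-c)) s := (Real.hasDerivAt_cosh _).comp s h1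
    have hsinh : HasDerivAt (fun s => Real.sinh (c * (T - s)))
        (Real.cosh (c * (T - s)) * (-c)) s := (Real.hasDerivAt_sinh _).comp s h1
    have := ((hcosh.const_mul c).add (hsinh.const_mul μ)).const_mul (-(1 / D))
    refine this.congr_deriv ?_
    ring
  have hint : IntervalIntegrable
      (fun s => (c / D) * (c * Real.sinh (c * (T - s)) + μ * Real.cosh (c * (T - s))))
      MeasureTheory.volume t T := by
    apply Continuous.intervalIntegrable
    fun_prop
  rw [intervalIntegral.integral_eq_sub_of_hasDerivAt hder hint]
  simp only [sub_self, mul_zero, Real.cosh_zero, Real.sinh_zero]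
  have hD2 : 0 < c * Real.cosh (c * (T - t)) + μ * Real.sinh (c * (T - t)) := by linarith
  field_simp
  ring
end

section
/- For every t ∈ [0,T], Λ(t)·ω(t,T) = λ·exp(−∫_t^T Λ(s)/η ds). (This identity shows that the coefficient of the expected terminal benchmark 𝔼[H|𝓕_t⁰] in the optimal tracking rate −(Λ_t/η)(X_t* − Î_t^H) matches the corresponding term (λ/η)e^{−∫_t^T Λ_s/η ds} coming from the explicit solution of the linear BSDE (4.4).) -/
open Real

/-- The identity Λ(t)·ω(t,T) = λ·exp(−∫_t^T Λ(s)/η ds) of Section 4.1. -/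
theorem stmt_14 (T η q lam : ℝ) (hT : 0 < T) (hη : 0 < η) (hq : 0 < q) (hlam : 0 ≤ lam)
    (c : ℝ) (hc : c = Real.sqrt (q / η))
    (Lam : ℝ → ℝ)
    (hLam : ∀ t, Lam t =
      η * c * (c * Real.sinh (c * (T - t)) + (lam / η) * Real.cosh (c * (T - t))) /
        ((lam / η) * Real.sinh (c * (T - t)) + c * Real.cosh (c * (T - t))))
    (ω : ℝ → ℝ)
    (hω : ∀ t, ω t =
      (lam / η) / (c * Real.sinh (c * (T - t)) + (lam / η) * Real.cosh (c * (T - t)))) :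
    ∀ t ∈ Set.Icc (0 : ℝ) T,
      Lam t * ω t = lam * Real.exp (-(∫ s in t..T, Lam s / η)) := by
  intro t ht
  obtain ⟨ht0, htT⟩ := ht
  have hc0 : 0 < c := hc ▸ Real.sqrt_pos.mpr (div_pos hq hη)
  rcases eq_or_lt_of_le hlam with h0 | hlam'
  · simp [hω t, ← h0]
  set r : ℝ := lam / η with hr
  have hr0 : 0 < r := div_pos hlam' hη
  set D : ℝ → ℝ := fun s => r * Real.sinh (c * (T - s)) + c * Real.cosh (c * (T - s))
    with hD
  have hDpos : ∀ s ∈ Set.Icc t T, 0 < D s := by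
    intro s hs
    have h1 : 0 ≤ c * (T - s) := mul_nonneg hc0.le (by linarith [hs.2])
    have h2 : 0 ≤ Real.sinh (c * (T - s)) := Real.sinh_nonneg_iff.mpr h1
    have h3 : 0 < Real.cosh (c * (T - s)) := Real.cosh_pos _
    have : 0 < c * Real.cosh (c * (T - s)) := mul_pos hc0 h3
    have : 0 ≤ r * Real.sinh (c * (T - s)) := mul_nonneg hr0.le h2
    simp only [hD]
    nlinarith
  have hDderiv : ∀ s, HasDerivAt D
      (-(c * (r * Real.cosh (c * (T - s)) + c * Real.sinh (c * (T - s))))) s := by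
    intro s
    have h1 : HasDerivAt (fun u => c * (T - u)) (-c) s := by
      simpa using ((hasDerivAt_id s).const_sub T).const_mul c
    have h2 := (h1.sinh).const_mul r
    have h3 := (h1.cosh).const_mul c
    convert h2.add h3 using 1
    exacts [rfl, rfl, rfl, by ring]
  have hfeq : ∀ s ∈ Set.Icc t T,
      Lam s / η = c * (c * Real.sinh (c * (T - s)) + r * Real.cosh (c * (T - s))) / D s := by
    intro s hs
    have hDne := (hDpos s hs).ne'
    rw [hLam s]
    simp only [hD, ← hr] at *
    field_simp
  have hDT : D T = c := by simp [hD]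
  have hderiv : ∀ s ∈ Set.uIcc t T,
      HasDerivAt (fun u => -Real.log (D u)) (Lam s / η) s := by
    rw [Set.uIcc_of_le htT]
    intro s hs
    have hDne := (hDpos s hs).ne'
    have h := ((hDderiv s).log hDne).neg
    rw [hfeq s hs]
    convert h using 1
    exacts [rfl, rfl, rfl, by ring]
  have hint : IntervalIntegrable (fun s => Lam s / η) MeasureTheory.volume t T := by
    apply ContinuousOn.intervalIntegrable
    rw [Set.uIcc_of_le htT]
    have hg : ContinuousOn
        (fun s => c * (c * Real.sinh (c * (T - s)) + r * Real.cosh (c * (T - s))) / D s)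
        (Set.Icc t T) := by
      apply ContinuousOn.div (by fun_prop) (by fun_prop)
      exact fun s hs => (hDpos s hs).ne'
    exact hg.congr fun s hs => hfeq s hs
  have hFTC := intervalIntegral.integral_eq_sub_of_hasDerivAt hderiv hint
  have htmem : t ∈ Set.Icc t T := ⟨le_refl t, htT⟩
  have hDt := hDpos t htmem
  have hexp : Real.exp (-(∫ s in t..T, Lam s / η)) = c / D t := by
    rw [hFTC, hDT]
    have : -(-Real.log c - -Real.log (D t)) = Real.log c - Real.log (D t) := by ring
    rw [this, Real.exp_sub, Real.exp_log hc0, Real.exp_log hDt]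
  have hMpos : 0 < c * Real.sinh (c * (T - t)) + r * Real.cosh (c * (T - t)) := by
    have h1 : 0 ≤ c * (T - t) := mul_nonneg hc0.le (by linarith)
    have h2 := Real.sinh_nonneg_iff.mpr h1
    have h3 : (0:ℝ) < Real.cosh (c * (T - t)) := Real.cosh_pos _
    nlinarith
  have hlamr : lam = r * η := by
    rw [hr]; field_simp
  have hDt' : D t ≠ 0 := hDt.ne'
  rw [hexp, hLam t, hω t, hlamr]
  simp only [hD, ← hr] at hDt' ⊢
  field_simp [hMpos.ne', hDt']
end

section
/- For every 0 ≤ t < T and every s ∈ [t,T], Λ(t)·(1 − ω(t,T))·K(t,s) = q·exp(−∫_t^s Λ(u)/η du). (This identity shows that the coefficient of the running target I_s in the optimal tracking rate −(Λ_t/η)(X_t* − Î_t^H) matches the corresponding term (q/η)e^{−∫_t^s Λ_u/η du} coming from the explicit solution of the linear BSDE (4.4).) -/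
open Real

/-- The identity Λ(t)·(1 − ω(t,T))·K(t,s) = q·exp(−∫_t^s Λ(u)/η du) of Section 4.1. -/
theorem stmt_15 (T η q lam : ℝ) (hT : 0 < T) (hη : 0 < η) (hq : 0 < q) (hlam : 0 ≤ lam)
    (c : ℝ) (hc : c = Real.sqrt (q / η))
    (Lam : ℝ → ℝ)
    (hLam : ∀ t, Lam t =
      η * c * (c * Real.sinh (c * (T - t)) + (lam / η) * Real.cosh (c * (T - t))) /
        ((lam / η) * Real.sinh (c * (T - t)) + c * Real.cosh (c * (T - t))))
    (ω : ℝ → ℝ)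
    (hω : ∀ t, ω t =
      (lam / η) / (c * Real.sinh (c * (T - t)) + (lam / η) * Real.cosh (c * (T - t))))
    (K : ℝ → ℝ → ℝ)
    (hK : ∀ t s, K t s =
      c * (c * Real.cosh (c * (T - s)) + (lam / η) * Real.sinh (c * (T - s))) /
        (c * Real.sinh (c * (T - t)) + (lam / η) * (Real.cosh (c * (T - t)) - 1))) :
    ∀ t ∈ Set.Ico (0 : ℝ) T, ∀ s ∈ Set.Icc t T,
      Lam t * (1 - ω t) * K t s = q * Real.exp (-(∫ u in t..s, Lam u / η)) := by
  intro t ht s hs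
  obtain ⟨ht0, htT⟩ := ht
  obtain ⟨hts, hsT⟩ := hs
  have hc0 : 0 < c := by
    rw [hc]; exact Real.sqrt_pos.mpr (div_pos hq hη)
  have hc2 : c ^ 2 = q / η := by
    rw [hc]; exact Real.sq_sqrt (div_pos hq hη).le
  set m : ℝ := lam / η with hm
  have hm0 : 0 ≤ m := div_nonneg hlam hη.le
  set D : ℝ → ℝ := fun u => m * Real.sinh (c * (T - u)) + c * Real.cosh (c * (T - u)) with hD
  have hDpos : ∀ u, u ≤ T → 0 < D u := by
    intro u hu
    have h1 : 0 ≤ Real.sinh (c * (T - u)) :=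
      Real.sinh_nonneg_iff.mpr (mul_nonneg hc0.le (by linarith))
    have h2 : 0 < Real.cosh (c * (T - u)) := Real.cosh_pos _
    have h3 := mul_nonneg hm0 h1
    have h4 := mul_pos hc0 h2
    show 0 < m * Real.sinh (c * (T - u)) + c * Real.cosh (c * (T - u))
    linarith
  have hDeriv : ∀ u, HasDerivAt D
      (-(c * (c * Real.sinh (c * (T - u)) + m * Real.cosh (c * (T - u))))) u := by
    intro u
    have h1 : HasDerivAt (fun u : ℝ => c * (T - u)) (-c) u := by
      simpa using ((hasDerivAt_id u).const_sub T).const_mul c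
    have hs1 : HasDerivAt (fun u : ℝ => Real.sinh (c * (T - u)))
        (Real.cosh (c * (T - u)) * (-c)) u := (Real.hasDerivAt_sinh _).comp u h1
    have hs2 : HasDerivAt (fun u : ℝ => Real.cosh (c * (T - u)))
        (Real.sinh (c * (T - u)) * (-c)) u := (Real.hasDerivAt_cosh _).comp u h1
    have := (hs1.const_mul m).add (hs2.const_mul c)
    refine this.congr_deriv ?_
    ring
  have huIcc : Set.uIcc t s = Set.Icc t s := Set.uIcc_of_le hts
  have hf : ∀ u ∈ Set.uIcc t s, HasDerivAt (fun u => -Real.log (D u)) (Lam u / η) u := by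
    intro u hu
    rw [huIcc] at hu
    have huT : u ≤ T := hu.2.trans hsT
    have hDu := hDpos u huT
    have := ((hDeriv u).log hDu.ne').neg
    refine this.congr_deriv ?_
    rw [hLam u]
    have hDu' : D u = m * Real.sinh (c * (T - u)) + c * Real.cosh (c * (T - u)) := rfl
    rw [hDu'] at hDu ⊢
    field_simp
  have hcont : ContinuousOn (fun u => Lam u / η) (Set.uIcc t s) := by
    have : ∀ u ∈ Set.uIcc t s, Lam u / η =
        c * (c * Real.sinh (c * (T - u)) + m * Real.cosh (c * (T - u))) / D u := by
      intro u hu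
      rw [huIcc] at hu
      have hDu := hDpos u (hu.2.trans hsT)
      rw [hLam u]
      have hDu' : D u = m * Real.sinh (c * (T - u)) + c * Real.cosh (c * (T - u)) := rfl
      rw [hDu'] at hDu ⊢
      field_simp
    refine ContinuousOn.congr ?_ this
    apply ContinuousOn.div
    · fun_prop
    · fun_prop
    · intro u hu
      rw [huIcc] at hu
      exact (hDpos u (hu.2.trans hsT)).ne'
  have hint : IntervalIntegrable (fun u => Lam u / η) MeasureTheory.volume t s :=
    hcont.intervalIntegrable
  have hInt : (∫ u in t..s, Lam u / η) = Real.log (D t) - Real.log (D s) := by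
    have := intervalIntegral.integral_eq_sub_of_hasDerivAt hf hint
    rw [this]; ring
  have hDt := hDpos t htT.le
  have hDs := hDpos s hsT
  have hexp : Real.exp (-(∫ u in t..s, Lam u / η)) = D s / D t := by
    rw [hInt]
    rw [neg_sub, Real.exp_sub, Real.exp_log hDt, Real.exp_log hDs]
  rw [hexp, hLam t, hω t, hK t s]
  -- positivity of auxiliary denominators at t < T
  have hsinhpos : 0 < Real.sinh (c * (T - t)) :=
    Real.sinh_pos_iff.mpr (mul_pos hc0 (by linarith))
  have hcosh1 : 1 ≤ Real.cosh (c * (T - t)) := Real.one_le_cosh _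
  have hN : 0 < c * Real.sinh (c * (T - t)) + m * Real.cosh (c * (T - t)) := by
    nlinarith [mul_pos hc0 hsinhpos, mul_nonneg hm0 (by linarith : (0:ℝ) ≤ Real.cosh (c * (T - t)))]
  have hNm : 0 < c * Real.sinh (c * (T - t)) + m * (Real.cosh (c * (T - t)) - 1) := by
    nlinarith [mul_pos hc0 hsinhpos, mul_nonneg hm0 (by linarith : (0:ℝ) ≤ Real.cosh (c * (T - t)) - 1)]
  have hq' : q = η * c ^ 2 := by
    field_simp at hc2; linarith [hc2]
  rw [hq']
  have hDt' : D t = m * Real.sinh (c * (T - t)) + c * Real.cosh (c * (T - t)) := rfl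
  have hDs' : D s = m * Real.sinh (c * (T - s)) + c * Real.cosh (c * (T - s)) := rfl
  rw [hDt', hDs']
  field_simp
  ring
end

section
/- Let μ be a Borel probability measure on ℝ^d with finite second moment and mean μ̄ = ∫x μ(dx). Let Q, Q̄, k, ℓ, Z^K, Z^Λ ∈ 𝕊^d, let B, B̄, D, D̄, D⁰, D̄⁰ ∈ ℝ^{d×d}, C, F, F⁰ ∈ ℝ^{d×m}, M, b⁰, γ, γ⁰, y, Z^Y ∈ ℝ^d, N ∈ 𝕊^m and a ∈ ℝ^m. Define the affine maps b(x) = b⁰ + Bx + B̄μ̄ + Ca, σ(x) = γ + Dx + D̄μ̄ + Fa, σ⁰(x) = γ⁰ + D⁰x + D̄⁰μ̄ + F⁰a. Then: [Var(μ,Q) + μ̄ᵀ(Q+Q̄)μ̄ + Mᵀμ̄ + aᵀNa] + ∫ b(x)ᵀ(2k(x−μ̄) + 2ℓμ̄ + y) μ(dx) + ∫ (σ(x)ᵀkσ(x) + σ⁰(x)ᵀkσ⁰(x)) μ(dx) + (∫σ⁰(x)μ(dx))ᵀ(ℓ − k)(∫σ⁰(x)μ(dx)) + ∫ σ⁰(x)ᵀ(2Z^K(x−μ̄)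 + 2Z^Λμ̄ + Z^Y) μ(dx) = Var(μ, Φ) + μ̄ᵀΨμ̄ + Θᵀμ̄ + Δ + aᵀΓa + (2Uᵀμ̄ + R)ᵀa, where Φ = Q + Bᵀk + kB + DᵀkD + (D⁰)ᵀkD⁰ + (D⁰)ᵀZ^K + Z^K D⁰; Ψ = Q + Q̄ + (D+D̄)ᵀk(D+D̄) + (D⁰+D̄⁰)ᵀℓ(D⁰+D̄⁰) + (B+B̄)ᵀℓ + ℓ(B+B̄) + (D⁰+D̄⁰)ᵀZ^Λ + Z^Λ(D⁰+D̄⁰); Θ = M + (B+B̄)ᵀy + 2ℓb⁰ + 2(D+D̄)ᵀkγ + 2(D⁰+D̄⁰)ᵀℓγ⁰ + (D⁰+D̄⁰)ᵀZ^Y + 2Z^Λγ⁰; Δ = yᵀb⁰ + γᵀkγ + (γ⁰)ᵀℓγ⁰ + (Z^Y)ᵀγ⁰; Γ = N + FᵀkF + (F⁰)ᵀℓF⁰; U = (D+D̄)ᵀkF + (D⁰+D̄⁰)ᵀℓF⁰ + ℓC + Z^ΛF⁰; and R = 2Fᵀkγ + 2(F⁰)ᵀℓγ⁰ + Cᵀy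 + (F⁰)ᵀZ^Y. (This is the algebraic identity of Section 3.1 computing the drift 𝒟_t(μ,a,k,ℓ,y) of the process S^α in grouped form (3.5), which leads to the backward stochastic Riccati system (3.7) in the open-loop case A = ℝ^m.) -/
open MeasureTheory Matrix
set_option linter.unusedSectionVars false
set_option maxHeartbeats 1000000


section ints
variable {d : ℕ} {μ : Measure (Fin d → ℝ)} [IsProbabilityMeasure μ]

lemma int_coord (hμ2 : Integrable (fun x => ∑ i, (x i) ^ 2) μ) (i : Fin d) :
    Integrable (fun x : Fin d → ℝ => x i) μ := by
  refine Integrable.mono' ((integrable_const 1).add hμ2) ((measurable_pi_apply i).aestronglyMeasurable) ?_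
  refine Filter.Eventually.of_forall fun x => ?_
  simp only [Pi.add_apply]
  have h1 : (x i)^2 ≤ ∑ j, (x j)^2 :=
    Finset.single_le_sum (fun j _ => sq_nonneg (x j)) (Finset.mem_univ i)
  have : ‖x i‖ = |x i| := rfl
  rw [this]
  nlinarith [sq_abs (x i), abs_nonneg (x i)]

lemma int_prod (hμ2 : Integrable (fun x => ∑ i, (x i) ^ 2) μ) (i j : Fin d) :
    Integrable (fun x : Fin d → ℝ => x i * x j) μ := by
  refine Integrable.mono' (hμ2.add hμ2) (((measurable_pi_apply i).mul (measurable_pi_apply j)).aestronglyMeasurable) ?_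
  refine Filter.Eventually.of_forall fun x => ?_
  simp only [Pi.add_apply]
  have h1 : (x i)^2 ≤ ∑ k, (x k)^2 :=
    Finset.single_le_sum (fun k _ => sq_nonneg (x k)) (Finset.mem_univ i)
  have h2 : (x j)^2 ≤ ∑ k, (x k)^2 :=
    Finset.single_le_sum (fun k _ => sq_nonneg (x k)) (Finset.mem_univ j)
  have : ‖x i * x j‖ = |x i * x j| := rfl
  rw [this]
  have := abs_mul (x i) (x j)
  nlinarith [sq_abs (x i), sq_abs (x j), abs_nonneg (x i), abs_nonneg (x j), sq_nonneg (|x i| - |x j|)]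

lemma int_id (hμ2 : Integrable (fun x => ∑ i, (x i) ^ 2) μ) :
    Integrable (fun x : Fin d → ℝ => x) μ := by
  refine Integrable.mono' ((integrable_const 1).add hμ2) aestronglyMeasurable_id ?_
  refine Filter.Eventually.of_forall fun x => ?_
  simp only [Pi.add_apply]
  have hnn : (0:ℝ) ≤ 1 + ∑ j, (x j)^2 := by positivity
  rw [pi_norm_le_iff_of_nonneg hnn]
  intro i
  have h1 : (x i)^2 ≤ ∑ j, (x j)^2 :=
    Finset.single_le_sum (fun j _ => sq_nonneg (x j)) (Finset.mem_univ i)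
  have : ‖x i‖ = |x i| := rfl
  rw [this]
  nlinarith [sq_abs (x i), abs_nonneg (x i)]

lemma int_affprod (hμ2 : Integrable (fun x => ∑ i, (x i) ^ 2) μ) (i j : Fin d) (ci cj : ℝ) :
    Integrable (fun x : Fin d → ℝ => (x i - ci) * (x j - cj)) μ := by
  have h : (fun x : Fin d → ℝ => (x i - ci) * (x j - cj))
      = fun x => x i * x j - ci * x j - cj * x i + ci * cj := by
    funext x; ring
  rw [h]
  have h1 : Integrable (fun x : Fin d → ℝ => ci * x j) μ := (int_coord hμ2 j).const_mul ci
  have h2 : Integrable (fun x : Fin d → ℝ => cj * x i) μ := (int_coord hμ2 i).const_mul cj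
  exact (((int_prod hμ2 i j).sub h1).sub h2).add (integrable_const _)

lemma intT (hμ2 : Integrable (fun x => ∑ i, (x i) ^ 2) μ) (mb : Fin d → ℝ)
    (A : Matrix (Fin d) (Fin d) ℝ) :
    Integrable (fun x : Fin d → ℝ => (x - mb) ⬝ᵥ A.mulVec (x - mb)) μ := by
  have h : (fun x : Fin d → ℝ => (x - mb) ⬝ᵥ A.mulVec (x - mb))
      = fun x => ∑ i, ∑ j, A i j * ((x i - mb i) * (x j - mb j)) := by
    funext x
    simp only [dotProduct, Matrix.mulVec, dotProduct, Pi.sub_apply, Finset.mul_sum]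
    refine Finset.sum_congr rfl fun i _ => Finset.sum_congr rfl fun j _ => by ring
  rw [h]
  refine integrable_finset_sum _ fun i _ => integrable_finset_sum _ fun j _ => ?_
  exact (int_affprod hμ2 i j (mb i) (mb j)).const_mul (A i j)

lemma intL (hμ2 : Integrable (fun x => ∑ i, (x i) ^ 2) μ) (mb : Fin d → ℝ) (w : Fin d → ℝ) :
    Integrable (fun x : Fin d → ℝ => w ⬝ᵥ (x - mb)) μ := by
  have h : (fun x : Fin d → ℝ => w ⬝ᵥ (x - mb)) = fun x => ∑ i, w i * (x i - mb i) := by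
    funext x; simp [dotProduct]
  rw [h]
  refine integrable_finset_sum _ fun i _ => ?_
  have : Integrable (fun x : Fin d → ℝ => x i - mb i) μ :=
    (int_coord hμ2 i).sub (integrable_const _)
  exact this.const_mul (w i)

lemma hmean0 (hμ2 : Integrable (fun x => ∑ i, (x i) ^ 2) μ) (mb : Fin d → ℝ)
    (hmb : mb = ∫ x, x ∂μ) (i : Fin d) : ∫ x, x i ∂μ = mb i := by
  have h := (ContinuousLinearMap.proj (R := ℝ) (φ := fun _ : Fin d => ℝ) i).integral_comp_comm
    (int_id hμ2)
  simp only [ContinuousLinearMap.proj_apply] at h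
  rw [hmb]; exact h

lemma hzero (hμ2 : Integrable (fun x => ∑ i, (x i) ^ 2) μ) (mb : Fin d → ℝ)
    (hmb : mb = ∫ x, x ∂μ) (w : Fin d → ℝ) : ∫ x, w ⬝ᵥ (x - mb) ∂μ = 0 := by
  have h : (fun x : Fin d → ℝ => w ⬝ᵥ (x - mb)) = fun x => ∑ i, w i * (x i - mb i) := by
    funext x; simp [dotProduct]
  have hint : ∀ i : Fin d, Integrable (fun x : Fin d → ℝ => w i * (x i - mb i)) μ := by
    intro i
    have : Integrable (fun x : Fin d → ℝ => x i - mb i) μ :=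
      (int_coord hμ2 i).sub (integrable_const _)
    exact this.const_mul (w i)
  rw [h, integral_finset_sum _ fun i _ => hint i]
  refine Finset.sum_eq_zero fun i _ => ?_
  have hsub : Integrable (fun x : Fin d → ℝ => x i - mb i) μ :=
    (int_coord hμ2 i).sub (integrable_const _)
  rw [integral_const_mul (w i) _, integral_sub (int_coord hμ2 i) (integrable_const _),
    hmean0 hμ2 mb hmb i]
  simp
end ints


lemma dotL {n m' : Type*} [Fintype n] [Fintype m'] (A : Matrix n m' ℝ) (v : m' → ℝ) (w : n → ℝ) :
    (A.mulVec v) ⬝ᵥ w = v ⬝ᵥ (A.transpose.mulVec w) := by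
  rw [dotProduct_comm, Matrix.dotProduct_mulVec, ← Matrix.mulVec_transpose, dotProduct_comm,
    Matrix.dotProduct_mulVec, ← Matrix.mulVec_transpose, Matrix.transpose_transpose]

lemma dotT {n m' : Type*} [Fintype n] [Fintype m'] (A : Matrix n m' ℝ) (v : m' → ℝ) (w : n → ℝ) :
    v ⬝ᵥ (A.transpose.mulVec w) = w ⬝ᵥ (A.mulVec v) := by
  rw [← dotL, dotProduct_comm]

lemma symm_dot {n : Type*} [Fintype n] (S : Matrix n n ℝ) (hS : S.IsSymm) (v w : n → ℝ) :
    v ⬝ᵥ S.mulVec w = w ⬝ᵥ S.mulVec v := by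
  rw [Matrix.dotProduct_mulVec, ← Matrix.mulVec_transpose, hS.eq, dotProduct_comm]

variable {n : Type*} [Fintype n]

lemma ptA3 (B S : Matrix n n ℝ) (hS : S.IsSymm) (bc w2 v : n → ℝ) :
    (bc + B.mulVec v) ⬝ᵥ ((2:ℝ) • S.mulVec v + w2)
    = bc ⬝ᵥ w2 + (((2:ℝ) • S).transpose.mulVec bc + B.transpose.mulVec w2) ⬝ᵥ v
      + v ⬝ᵥ (B.transpose * ((2:ℝ) • S)).mulVec v := by
  simp only [Matrix.add_mulVec, Matrix.mulVec_add, Matrix.smul_mulVec,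
    add_dotProduct, dotProduct_add, smul_dotProduct, dotProduct_smul,
    ← Matrix.mulVec_mulVec, Matrix.transpose_mul, Matrix.transpose_smul,
    Matrix.transpose_transpose, dotL, smul_eq_mul, hS.eq, Matrix.mulVec_smul]
  rw [dotT B v w2]
  ring

lemma ptquad (D S : Matrix n n ℝ) (hS : S.IsSymm) (sc v : n → ℝ) :
    (sc + D.mulVec v) ⬝ᵥ S.mulVec (sc + D.mulVec v)
    = sc ⬝ᵥ S.mulVec sc + ((2:ℝ) • D.transpose.mulVec (S.mulVec sc)) ⬝ᵥ v
      + v ⬝ᵥ (D.transpose * S * D).mulVec v := by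
  simp only [Matrix.add_mulVec, Matrix.mulVec_add, Matrix.smul_mulVec,
    add_dotProduct, dotProduct_add, smul_dotProduct, dotProduct_smul,
    ← Matrix.mulVec_mulVec, Matrix.transpose_mul, Matrix.transpose_smul,
    Matrix.transpose_transpose, dotL, smul_eq_mul, hS.eq, Matrix.mulVec_smul]
  rw [dotT D v (S.mulVec sc), dotL S sc (D.mulVec v), hS.eq]
  ring

lemma ptΦ (Q B D D0 k ZK : Matrix n n ℝ) (hk : k.IsSymm) (hZK : ZK.IsSymm) (v : n → ℝ) :
    v ⬝ᵥ (Q + B.transpose * k + k * B + D.transpose * k * D + D0.transpose * k * D0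
      + D0.transpose * ZK + ZK * D0).mulVec v
    = v ⬝ᵥ Q.mulVec v + v ⬝ᵥ (B.transpose * ((2:ℝ) • k)).mulVec v
      + v ⬝ᵥ (D.transpose * k * D).mulVec v + v ⬝ᵥ (D0.transpose * k * D0).mulVec v
      + v ⬝ᵥ (D0.transpose * ((2:ℝ) • ZK)).mulVec v := by
  simp only [Matrix.add_mulVec, Matrix.mulVec_add, Matrix.smul_mulVec,
    add_dotProduct, dotProduct_add, smul_dotProduct, dotProduct_smul,
    ← Matrix.mulVec_mulVec, Matrix.transpose_mul, Matrix.transpose_smul,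
    Matrix.transpose_transpose, dotL, smul_eq_mul, hk.eq, hZK.eq, Matrix.mulVec_smul]
  rw [symm_dot k hk v (B.mulVec v), dotL B v (k.mulVec v),
    symm_dot ZK hZK v (D0.mulVec v), dotL D0 v (ZK.mulVec v)]
  ring


lemma symmA {n m' : Type*} [Fintype n] [Fintype m'] (S : Matrix n n ℝ) (hS : S.IsSymm)
    (A : Matrix n m' ℝ) (v : n → ℝ) (w : m' → ℝ) :
    v ⬝ᵥ S.mulVec (A.mulVec w) = w ⬝ᵥ A.transpose.mulVec (S.mulVec v) := by
  rw [symm_dot S hS v (A.mulVec w), dotL]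

lemma symmB {n m' m'' : Type*} [Fintype n] [Fintype m'] [Fintype m'']
    (S : Matrix n n ℝ) (hS : S.IsSymm) (A : Matrix n m' ℝ) (B' : Matrix n m'' ℝ)
    (v : m' → ℝ) (w : m'' → ℝ) :
    v ⬝ᵥ A.transpose.mulVec (S.mulVec (B'.mulVec w))
    = w ⬝ᵥ B'.transpose.mulVec (S.mulVec (A.mulVec v)) := by
  rw [dotT, dotL S (B'.mulVec w) (A.mulVec v), hS.eq, dotL B' w (S.mulVec (A.mulVec v))]

lemma const_id {n m : Type*} [Fintype n] [Fintype m]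
    (Q Qb k ℓ ZΛ : Matrix n n ℝ) (hk : k.IsSymm) (hℓ : ℓ.IsSymm) (hZΛ : ZΛ.IsSymm)
    (B Bb D Db D0 Db0 : Matrix n n ℝ) (C F F0 : Matrix n m ℝ)
    (M b0 γ γ0 y ZY : n → ℝ) (N : Matrix m m ℝ) (a : m → ℝ) (mb : n → ℝ) :
    (b0 + (B + Bb).mulVec mb + C.mulVec a) ⬝ᵥ ((2:ℝ) • ℓ.mulVec mb + y)
      + (γ + (D + Db).mulVec mb + F.mulVec a) ⬝ᵥ
          k.mulVec (γ + (D + Db).mulVec mb + F.mulVec a)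
      + (γ0 + (D0 + Db0).mulVec mb + F0.mulVec a) ⬝ᵥ
          ((2:ℝ) • ZΛ.mulVec mb + ZY)
      + mb ⬝ᵥ (Q + Qb).mulVec mb + M ⬝ᵥ mb + a ⬝ᵥ N.mulVec a
      + (γ0 + (D0 + Db0).mulVec mb + F0.mulVec a) ⬝ᵥ
          ℓ.mulVec (γ0 + (D0 + Db0).mulVec mb + F0.mulVec a)
    = mb ⬝ᵥ (Q + Qb + (D + Db).transpose * k * (D + Db)
        + (D0 + Db0).transpose * ℓ * (D0 + Db0)
        + (B + Bb).transpose * ℓ + ℓ * (B + Bb)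
        + (D0 + Db0).transpose * ZΛ + ZΛ * (D0 + Db0)).mulVec mb
      + (M + (B + Bb).transpose.mulVec y + (2 : ℝ) • ℓ.mulVec b0
        + (2 : ℝ) • (D + Db).transpose.mulVec (k.mulVec γ)
        + (2 : ℝ) • (D0 + Db0).transpose.mulVec (ℓ.mulVec γ0)
        + (D0 + Db0).transpose.mulVec ZY + (2 : ℝ) • ZΛ.mulVec γ0) ⬝ᵥ mb
      + (y ⬝ᵥ b0 + γ ⬝ᵥ k.mulVec γ + γ0 ⬝ᵥ ℓ.mulVec γ0 + ZY ⬝ᵥ γ0)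
      + a ⬝ᵥ (N + F.transpose * k * F + F0.transpose * ℓ * F0).mulVec a
      + ((2 : ℝ) • ((D + Db).transpose * k * F + (D0 + Db0).transpose * ℓ * F0
          + ℓ * C + ZΛ * F0).transpose.mulVec mb
        + ((2 : ℝ) • F.transpose.mulVec (k.mulVec γ)
          + (2 : ℝ) • F0.transpose.mulVec (ℓ.mulVec γ0)
          + C.transpose.mulVec y + F0.transpose.mulVec ZY)) ⬝ᵥ a := by
  simp only [Matrix.add_mulVec, Matrix.sub_mulVec, Matrix.mulVec_add, Matrix.mulVec_sub,
    Matrix.smul_mulVec, add_dotProduct, dotProduct_add, sub_dotProduct, dotProduct_sub,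
    smul_dotProduct, dotProduct_smul, ← Matrix.mulVec_mulVec, Matrix.transpose_mul,
    Matrix.transpose_smul, Matrix.transpose_add, Matrix.transpose_transpose, dotL,
    smul_eq_mul, hk.eq, hℓ.eq, hZΛ.eq, Matrix.mulVec_smul,
    symmA k hk, symmA ℓ hℓ, symmA ZΛ hZΛ]
  rw [dotT B mb y, dotT Bb mb y, dotT D0 mb ZY, dotT Db0 mb ZY, dotT C a y, dotT F0 a ZY,
    symmB k hk D F mb a, symmB k hk Db F mb a, symmB ℓ hℓ D0 F0 mb a, symmB ℓ hℓ Db0 F0 mb a,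
    dotProduct_comm b0 y, dotProduct_comm γ0 ZY]
  ring

/-- The algebraic identity of Section 3.1 computing the drift 𝒟_t(μ,a,k,ℓ,y) of the process
S^α in grouped form (3.5), leading to the backward stochastic Riccati system (3.7) in the
open-loop case A = ℝ^m. -/
theorem stmt_16 (d m : ℕ) (μ : Measure (Fin d → ℝ)) [IsProbabilityMeasure μ]
    (hμ2 : Integrable (fun x => ∑ i, (x i) ^ 2) μ)
    (Q Qb k ℓ ZK ZΛ : Matrix (Fin d) (Fin d) ℝ)
    (hQ : Q.IsSymm) (hQb : Qb.IsSymm) (hk : k.IsSymm) (hℓ : ℓ.IsSymm)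
    (hZK : ZK.IsSymm) (hZΛ : ZΛ.IsSymm)
    (B Bb D Db D0 Db0 : Matrix (Fin d) (Fin d) ℝ)
    (C F F0 : Matrix (Fin d) (Fin m) ℝ)
    (M b0 γ γ0 y ZY : Fin d → ℝ)
    (N : Matrix (Fin m) (Fin m) ℝ) (hN : N.IsSymm)
    (a : Fin m → ℝ)
    (mb : Fin d → ℝ) (hmb : mb = ∫ x, x ∂μ)
    (b σ σ0 : (Fin d → ℝ) → (Fin d → ℝ))
    (hb : ∀ x, b x = b0 + B.mulVec x + Bb.mulVec mb + C.mulVec a)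
    (hσ : ∀ x, σ x = γ + D.mulVec x + Db.mulVec mb + F.mulVec a)
    (hσ0 : ∀ x, σ0 x = γ0 + D0.mulVec x + Db0.mulVec mb + F0.mulVec a)
    (Φ Ψ : Matrix (Fin d) (Fin d) ℝ) (Θ : Fin d → ℝ) (Δ : ℝ)
    (Γ : Matrix (Fin m) (Fin m) ℝ) (U : Matrix (Fin d) (Fin m) ℝ) (R : Fin m → ℝ)
    (hΦ : Φ = Q + B.transpose * k + k * B + D.transpose * k * D + D0.transpose * k * D0
      + D0.transpose * ZK + ZK * D0)
    (hΨ : Ψ = Q + Qb + (D + Db).transpose * k * (D + Db)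
      + (D0 + Db0).transpose * ℓ * (D0 + Db0)
      + (B + Bb).transpose * ℓ + ℓ * (B + Bb)
      + (D0 + Db0).transpose * ZΛ + ZΛ * (D0 + Db0))
    (hΘ : Θ = M + (B + Bb).transpose.mulVec y + (2 : ℝ) • ℓ.mulVec b0
      + (2 : ℝ) • (D + Db).transpose.mulVec (k.mulVec γ)
      + (2 : ℝ) • (D0 + Db0).transpose.mulVec (ℓ.mulVec γ0)
      + (D0 + Db0).transpose.mulVec ZY + (2 : ℝ) • ZΛ.mulVec γ0)
    (hΔ : Δ = y ⬝ᵥ b0 + γ ⬝ᵥ k.mulVec γ + γ0 ⬝ᵥ ℓ.mulVec γ0 + ZY ⬝ᵥ γ0)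
    (hΓ : Γ = N + F.transpose * k * F + F0.transpose * ℓ * F0)
    (hU : U = (D + Db).transpose * k * F + (D0 + Db0).transpose * ℓ * F0 + ℓ * C + ZΛ * F0)
    (hR : R = (2 : ℝ) • F.transpose.mulVec (k.mulVec γ)
      + (2 : ℝ) • F0.transpose.mulVec (ℓ.mulVec γ0)
      + C.transpose.mulVec y + F0.transpose.mulVec ZY) :
    ((∫ x, (x - mb) ⬝ᵥ Q.mulVec (x - mb) ∂μ) + mb ⬝ᵥ (Q + Qb).mulVec mb
        + M ⬝ᵥ mb + a ⬝ᵥ N.mulVec a)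
      + (∫ x, b x ⬝ᵥ ((2 : ℝ) • k.mulVec (x - mb) + (2 : ℝ) • ℓ.mulVec mb + y) ∂μ)
      + (∫ x, (σ x ⬝ᵥ k.mulVec (σ x) + σ0 x ⬝ᵥ k.mulVec (σ0 x)) ∂μ)
      + (∫ x, σ0 x ∂μ) ⬝ᵥ (ℓ - k).mulVec (∫ x, σ0 x ∂μ)
      + (∫ x, σ0 x ⬝ᵥ ((2 : ℝ) • ZK.mulVec (x - mb) + (2 : ℝ) • ZΛ.mulVec mb + ZY) ∂μ)
    = (∫ x, (x - mb) ⬝ᵥ Φ.mulVec (x - mb) ∂μ) + mb ⬝ᵥ Ψ.mulVec mb + Θ ⬝ᵥ mb + Δ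
      + a ⬝ᵥ Γ.mulVec a + ((2 : ℝ) • U.transpose.mulVec mb + R) ⬝ᵥ a := by
  have hid : Integrable (fun x : Fin d → ℝ => x) μ := int_id hμ2
  have hsub : Integrable (fun x : Fin d → ℝ => x - mb) μ := hid.sub (integrable_const mb)
  -- pointwise forms of the affine maps
  have hbx : ∀ x, b x = (b0 + (B + Bb).mulVec mb + C.mulVec a) + B.mulVec (x - mb) := by
    intro x
    rw [hb x, Matrix.mulVec_sub, Matrix.add_mulVec]
    abel
  have hsx : ∀ x, σ x = (γ + (D + Db).mulVec mb + F.mulVec a) + D.mulVec (x - mb) := by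
    intro x
    rw [hσ x, Matrix.mulVec_sub, Matrix.add_mulVec]
    abel
  have hs0x : ∀ x, σ0 x = (γ0 + (D0 + Db0).mulVec mb + F0.mulVec a) + D0.mulVec (x - mb) := by
    intro x
    rw [hσ0 x, Matrix.mulVec_sub, Matrix.add_mulVec]
    abel
  -- mean of σ0
  have hsubmean : (∫ x, x - mb ∂μ) = 0 := by
    rw [integral_sub hid (integrable_const mb), integral_const]
    simp [← hmb]
  have hs0mean : (∫ x, σ0 x ∂μ) = γ0 + (D0 + Db0).mulVec mb + F0.mulVec a := by
    set T : (Fin d → ℝ) →L[ℝ] (Fin d → ℝ) :=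
      LinearMap.toContinuousLinearMap (Matrix.mulVecLin D0) with hT
    have hfun : (fun x => σ0 x)
        = fun x => (γ0 + (D0 + Db0).mulVec mb + F0.mulVec a) + T (x - mb) := by
      funext x
      rw [hs0x x]
      simp [hT, Matrix.mulVecLin_apply]
    rw [hfun, integral_add (integrable_const _) (T.integrable_comp hsub),
      T.integral_comp_comm hsub, hsubmean, integral_const]
    simp
  -- generic evaluation of (const + linear + quadratic) integrals
  have evalCLQ : ∀ (c : ℝ) (w : Fin d → ℝ) (A : Matrix (Fin d) (Fin d) ℝ),
      (∫ x, (c + w ⬝ᵥ (x - mb)) + (x - mb) ⬝ᵥ A.mulVec (x - mb) ∂μ)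
        = c + ∫ x, (x - mb) ⬝ᵥ A.mulVec (x - mb) ∂μ := by
    intro c w A
    have h1 : Integrable (fun x : Fin d → ℝ => c + w ⬝ᵥ (x - mb)) μ :=
      (integrable_const c).add (intL hμ2 mb w)
    rw [integral_add h1 (intT hμ2 mb A), integral_add (integrable_const c) (intL hμ2 mb w),
      hzero hμ2 mb hmb w, integral_const]
    simp
  -- the drift integral from b
  have hJ2 : (∫ x, b x ⬝ᵥ ((2 : ℝ) • k.mulVec (x - mb) + (2 : ℝ) • ℓ.mulVec mb + y) ∂μ)
      = (b0 + (B + Bb).mulVec mb + C.mulVec a) ⬝ᵥ ((2 : ℝ) • ℓ.mulVec mb + y)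
        + ∫ x, (x - mb) ⬝ᵥ (B.transpose * ((2 : ℝ) • k)).mulVec (x - mb) ∂μ := by
    have hptw : (fun x => b x ⬝ᵥ ((2 : ℝ) • k.mulVec (x - mb) + (2 : ℝ) • ℓ.mulVec mb + y))
        = fun x => ((b0 + (B + Bb).mulVec mb + C.mulVec a) ⬝ᵥ ((2 : ℝ) • ℓ.mulVec mb + y)
            + (((2 : ℝ) • k).transpose.mulVec (b0 + (B + Bb).mulVec mb + C.mulVec a)
              + B.transpose.mulVec ((2 : ℝ) • ℓ.mulVec mb + y)) ⬝ᵥ (x - mb))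
          + (x - mb) ⬝ᵥ (B.transpose * ((2 : ℝ) • k)).mulVec (x - mb) := by
      funext x
      rw [hbx x, add_assoc ((2 : ℝ) • k.mulVec (x - mb)) _ y, ptA3 B k hk _ _ (x - mb)]
    rw [hptw, evalCLQ _ _ _]
  -- the quadratic integral from σ, σ0
  have hJ4 : (∫ x, (σ x ⬝ᵥ k.mulVec (σ x) + σ0 x ⬝ᵥ k.mulVec (σ0 x)) ∂μ)
      = (γ + (D + Db).mulVec mb + F.mulVec a) ⬝ᵥ
          k.mulVec (γ + (D + Db).mulVec mb + F.mulVec a)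
        + (γ0 + (D0 + Db0).mulVec mb + F0.mulVec a) ⬝ᵥ
          k.mulVec (γ0 + (D0 + Db0).mulVec mb + F0.mulVec a)
        + (∫ x, (x - mb) ⬝ᵥ (D.transpose * k * D).mulVec (x - mb) ∂μ)
        + ∫ x, (x - mb) ⬝ᵥ (D0.transpose * k * D0).mulVec (x - mb) ∂μ := by
    have hptw : (fun x => σ x ⬝ᵥ k.mulVec (σ x) + σ0 x ⬝ᵥ k.mulVec (σ0 x))
        = fun x => (((γ + (D + Db).mulVec mb + F.mulVec a) ⬝ᵥ
              k.mulVec (γ + (D + Db).mulVec mb + F.mulVec a)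
            + ((2 : ℝ) • D.transpose.mulVec
                (k.mulVec (γ + (D + Db).mulVec mb + F.mulVec a))) ⬝ᵥ (x - mb))
            + (x - mb) ⬝ᵥ (D.transpose * k * D).mulVec (x - mb))
          + (((γ0 + (D0 + Db0).mulVec mb + F0.mulVec a) ⬝ᵥ
              k.mulVec (γ0 + (D0 + Db0).mulVec mb + F0.mulVec a)
            + ((2 : ℝ) • D0.transpose.mulVec
                (k.mulVec (γ0 + (D0 + Db0).mulVec mb + F0.mulVec a))) ⬝ᵥ (x - mb))
            + (x - mb) ⬝ᵥ (D0.transpose * k * D0).mulVec (x - mb)) := by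
      funext x
      rw [hsx x, hs0x x, ptquad D k hk _ (x - mb), ptquad D0 k hk _ (x - mb)]
    have c1 : Integrable (fun x : Fin d → ℝ =>
        ((γ + (D + Db).mulVec mb + F.mulVec a) ⬝ᵥ
            k.mulVec (γ + (D + Db).mulVec mb + F.mulVec a)
          + ((2 : ℝ) • D.transpose.mulVec
              (k.mulVec (γ + (D + Db).mulVec mb + F.mulVec a))) ⬝ᵥ (x - mb))
          + (x - mb) ⬝ᵥ (D.transpose * k * D).mulVec (x - mb)) μ :=
      ((integrable_const _).add (intL hμ2 mb _)).add (intT hμ2 mb _)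
    have c2 : Integrable (fun x : Fin d → ℝ =>
        ((γ0 + (D0 + Db0).mulVec mb + F0.mulVec a) ⬝ᵥ
            k.mulVec (γ0 + (D0 + Db0).mulVec mb + F0.mulVec a)
          + ((2 : ℝ) • D0.transpose.mulVec
              (k.mulVec (γ0 + (D0 + Db0).mulVec mb + F0.mulVec a))) ⬝ᵥ (x - mb))
          + (x - mb) ⬝ᵥ (D0.transpose * k * D0).mulVec (x - mb)) μ :=
      ((integrable_const _).add (intL hμ2 mb _)).add (intT hμ2 mb _)
    rw [hptw, integral_add c1 c2, evalCLQ _ _ _, evalCLQ _ _ _]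
    ring
  -- the drift integral from σ0 against ZK, ZΛ
  have hJ6 : (∫ x, σ0 x ⬝ᵥ ((2 : ℝ) • ZK.mulVec (x - mb) + (2 : ℝ) • ZΛ.mulVec mb + ZY) ∂μ)
      = (γ0 + (D0 + Db0).mulVec mb + F0.mulVec a) ⬝ᵥ ((2 : ℝ) • ZΛ.mulVec mb + ZY)
        + ∫ x, (x - mb) ⬝ᵥ (D0.transpose * ((2 : ℝ) • ZK)).mulVec (x - mb) ∂μ := by
    have hptw : (fun x => σ0 x ⬝ᵥ ((2 : ℝ) • ZK.mulVec (x - mb) + (2 : ℝ) • ZΛ.mulVec mb + ZY))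
        = fun x => ((γ0 + (D0 + Db0).mulVec mb + F0.mulVec a) ⬝ᵥ ((2 : ℝ) • ZΛ.mulVec mb + ZY)
            + (((2 : ℝ) • ZK).transpose.mulVec (γ0 + (D0 + Db0).mulVec mb + F0.mulVec a)
              + D0.transpose.mulVec ((2 : ℝ) • ZΛ.mulVec mb + ZY)) ⬝ᵥ (x - mb))
          + (x - mb) ⬝ᵥ (D0.transpose * ((2 : ℝ) • ZK)).mulVec (x - mb) := by
      funext x
      rw [hs0x x, add_assoc ((2 : ℝ) • ZK.mulVec (x - mb)) _ ZY, ptA3 D0 ZK hZK _ _ (x - mb)]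
    rw [hptw, evalCLQ _ _ _]
  -- splitting the Φ integral
  have hB1 : (∫ x, (x - mb) ⬝ᵥ Φ.mulVec (x - mb) ∂μ)
      = (∫ x, (x - mb) ⬝ᵥ Q.mulVec (x - mb) ∂μ)
        + (∫ x, (x - mb) ⬝ᵥ (B.transpose * ((2 : ℝ) • k)).mulVec (x - mb) ∂μ)
        + (∫ x, (x - mb) ⬝ᵥ (D.transpose * k * D).mulVec (x - mb) ∂μ)
        + (∫ x, (x - mb) ⬝ᵥ (D0.transpose * k * D0).mulVec (x - mb) ∂μ)
        + ∫ x, (x - mb) ⬝ᵥ (D0.transpose * ((2 : ℝ) • ZK)).mulVec (x - mb) ∂μ := by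
    have hptw : (fun x => (x - mb) ⬝ᵥ Φ.mulVec (x - mb))
        = fun x => (x - mb) ⬝ᵥ Q.mulVec (x - mb)
          + (x - mb) ⬝ᵥ (B.transpose * ((2 : ℝ) • k)).mulVec (x - mb)
          + (x - mb) ⬝ᵥ (D.transpose * k * D).mulVec (x - mb)
          + (x - mb) ⬝ᵥ (D0.transpose * k * D0).mulVec (x - mb)
          + (x - mb) ⬝ᵥ (D0.transpose * ((2 : ℝ) • ZK)).mulVec (x - mb) := by
      funext x
      rw [hΦ]
      exact ptΦ Q B D D0 k ZK hk hZK (x - mb)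
    have s2 : Integrable (fun x : Fin d → ℝ => (x - mb) ⬝ᵥ Q.mulVec (x - mb)
        + (x - mb) ⬝ᵥ (B.transpose * ((2 : ℝ) • k)).mulVec (x - mb)) μ :=
      (intT hμ2 mb _).add (intT hμ2 mb _)
    have s3 : Integrable (fun x : Fin d → ℝ => (x - mb) ⬝ᵥ Q.mulVec (x - mb)
        + (x - mb) ⬝ᵥ (B.transpose * ((2 : ℝ) • k)).mulVec (x - mb)
        + (x - mb) ⬝ᵥ (D.transpose * k * D).mulVec (x - mb)) μ :=
      s2.add (intT hμ2 mb _)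
    have s4 : Integrable (fun x : Fin d → ℝ => (x - mb) ⬝ᵥ Q.mulVec (x - mb)
        + (x - mb) ⬝ᵥ (B.transpose * ((2 : ℝ) • k)).mulVec (x - mb)
        + (x - mb) ⬝ᵥ (D.transpose * k * D).mulVec (x - mb)
        + (x - mb) ⬝ᵥ (D0.transpose * k * D0).mulVec (x - mb)) μ :=
      s3.add (intT hμ2 mb _)
    rw [hptw, integral_add s4 (intT hμ2 mb _), integral_add s3 (intT hμ2 mb _),
      integral_add s2 (intT hμ2 mb _), integral_add (intT hμ2 mb _) (intT hμ2 mb _)]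
  have hsplit : (γ0 + (D0 + Db0).mulVec mb + F0.mulVec a) ⬝ᵥ
        (ℓ - k).mulVec (γ0 + (D0 + Db0).mulVec mb + F0.mulVec a)
      = (γ0 + (D0 + Db0).mulVec mb + F0.mulVec a) ⬝ᵥ
          ℓ.mulVec (γ0 + (D0 + Db0).mulVec mb + F0.mulVec a)
        - (γ0 + (D0 + Db0).mulVec mb + F0.mulVec a) ⬝ᵥ
          k.mulVec (γ0 + (D0 + Db0).mulVec mb + F0.mulVec a) := by
    rw [Matrix.sub_mulVec, dotProduct_sub]
  have hconst := const_id Q Qb k ℓ ZΛ hk hℓ hZΛ B Bb D Db D0 Db0 C F F0 M b0 γ γ0 y ZY N a mb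
  rw [hJ2, hJ4, hJ6, hB1, hs0mean, hsplit, hΨ, hΘ, hΔ, hΓ, hU, hR]
  linarith [hconst]
end
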